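/- Let X, Y, Z be mm-spaces and ε₁, ε₂ ≥ 0. Suppose f : supp m_X → supp m_Y is Borel measurable and 1-Lipschitz up to ε₁ with d_P(f_* m_X, m_Y) ≤ ε₁, and g : supp m_Y → supp m_Z is Borel measurable and 1-Lipschitz up to ε₂ with d_P(g_* m_Y, m_Z) ≤ ε₂. Then for every s > 0 there exists a Borel measurable map h : supp m_X → supp m_Z that is 1-Lipschitz up to 3(ε₁ + ε₂) + s and satisfies d_P(h_* m_X, m_Z) ≤ 6(ε₁ + ε₂) + s. -/

import Mathlib

open MeasureTheory Topology Filter Set Metric ENNReal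

noncomputable section

/-- The support of a Borel measure: points all of whose open neighborhoods have
positive measure. -/
def msupport {X : Type*} [TopologicalSpace X] [MeasurableSpace X] (μ : Measure X) : Set X :=
  {x | ∀ U : Set X, IsOpen U → x ∈ U → 0 < μ U}

/-- `dis_≻ S = sup { d_Y(y,y') − d_X(x,x') : (x,y),(x',y') ∈ S }`, with `dis_≻ ∅ = 0`. -/
def disSucc {X Y : Type*} [MetricSpace X] [MetricSpace Y] (S : Set (X × Y)) : ℝ≥0∞ :=
  ⨆ p ∈ S, ⨆ q ∈ S, ENNReal.ofReal (dist p.2 q.2 - dist p.1 q.1)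

/-- `dis S = sup { |d_X(x,x') − d_Y(y,y')| : (x,y),(x',y') ∈ S }`, with `dis ∅ = 0`. -/
def disBox {X Y : Type*} [MetricSpace X] [MetricSpace Y] (S : Set (X × Y)) : ℝ≥0∞ :=
  ⨆ p ∈ S, ⨆ q ∈ S, ENNReal.ofReal |dist p.1 q.1 - dist p.2 q.2|

/-- `π` is a coupling of `μ` and `ν`. -/
def IsCoupling {X Y : Type*} [MeasurableSpace X] [MeasurableSpace Y]
    (π : Measure (X × Y)) (μ : Measure X) (ν : Measure Y) : Prop :=
  IsProbabilityMeasure π ∧ π.map Prod.fst = μ ∧ π.map Prod.snd = ν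

/-- `X ≻_ε Y`: the Lipschitz order with additive error `ε`. -/
def LipDomE {X Y : Type*} [MetricSpace X] [MetricSpace Y]
    [MeasurableSpace X] [MeasurableSpace Y]
    (μ : Measure X) (ν : Measure Y) (ε : ℝ) : Prop :=
  ∃ π : Measure (X × Y), IsCoupling π μ ν ∧
    ∃ S : Set (X × Y), IsClosed S ∧ disSucc S ≤ ENNReal.ofReal ε ∧
      ENNReal.ofReal (1 - ε) ≤ π S

/-- `X ≻ Y`: the Lipschitz order. There is a 1-Lipschitz map
`f : supp m_X → supp m_Y` with `f_* m_X = m_Y`. -/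
def LipOrder {X Y : Type*} [MetricSpace X] [MetricSpace Y]
    [MeasurableSpace X] [MeasurableSpace Y]
    (μ : Measure X) (ν : Measure Y) : Prop :=
  ∃ f : msupport μ → msupport ν, LipschitzWith 1 f ∧
    ∀ A : Set Y, MeasurableSet A →
      μ (Subtype.val '' ((fun x => (f x : Y)) ⁻¹' A)) = ν A

/-- The box metric. -/
def boxDist {X Y : Type*} [MetricSpace X] [MetricSpace Y]
    [MeasurableSpace X] [MeasurableSpace Y]
    (μ : Measure X) (ν : Measure Y) : ℝ≥0∞ :=
  ⨅ (S : Set (X × Y)) (_ : IsClosed S) (π : Measure (X × Y)) (_ : IsCoupling π μ ν),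
    max (disBox S) (1 - π S)

/-- The unilateral box metric `□_≻(X,Y) = inf { ε ≥ 0 : X ≻_ε Y }`. -/
def ubox {X Y : Type*} [MetricSpace X] [MetricSpace Y]
    [MeasurableSpace X] [MeasurableSpace Y]
    (μ : Measure X) (ν : Measure Y) : ℝ :=
  sInf {ε : ℝ | 0 ≤ ε ∧ LipDomE μ ν ε}

/-- The Prokhorov metric
`d_P(μ,ν) = inf { ε > 0 : μ(U_ε(A)) ≥ ν(A) − ε for every Borel A }`. -/
def prokDist {Y : Type*} [MetricSpace Y] [MeasurableSpace Y] (μ ν : Measure Y) : ℝ :=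
  sInf {ε : ℝ | 0 < ε ∧ ∀ A : Set Y, MeasurableSet A →
    ν A ≤ μ (Metric.thickening ε A) + ENNReal.ofReal ε}

/-- `f : supp m_X → supp m_Y` is 1-Lipschitz up to an additive error `ε`. -/
def LipUpTo {X Y : Type*} [MetricSpace X] [MetricSpace Y]
    [MeasurableSpace X] [MeasurableSpace Y]
    (μ : Measure X) (ν : Measure Y) (f : msupport μ → msupport ν) (ε : ℝ) : Prop :=
  ∃ X₀ : Set X, MeasurableSet X₀ ∧ X₀ ⊆ msupport μ ∧
    ENNReal.ofReal (1 - ε) ≤ μ X₀ ∧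
    ∀ x x' : msupport μ, (x : X) ∈ X₀ → (x' : X) ∈ X₀ →
      dist (f x : Y) (f x' : Y) ≤ dist (x : X) (x' : X) + ε

/-- `X ≻^{KY}_ε Y`: there is a Borel measurable map `f : supp m_X → supp m_Y`
which is 1-Lipschitz up to `ε` and satisfies `d_P(f_* m_X, m_Y) ≤ ε`. -/
def KYDom {X Y : Type*} [MetricSpace X] [MetricSpace Y]
    [MeasurableSpace X] [MeasurableSpace Y]
    (μ : Measure X) (ν : Measure Y) (ε : ℝ) : Prop :=
  ∃ f : msupport μ → msupport ν, Measurable f ∧ LipUpTo μ ν f ε ∧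
    prokDist (Measure.map (fun x => (f x : Y)) (Measure.comap Subtype.val μ)) ν ≤ ε


lemma isClosed_msupport {X : Type*} [TopologicalSpace X] [MeasurableSpace X] (μ : Measure X) :
    IsClosed (msupport μ) := by
  rw [← isOpen_compl_iff, isOpen_iff_forall_mem_open]
  intro x hx
  simp only [msupport, mem_compl_iff, mem_setOf_eq, not_forall] at hx
  obtain ⟨U, hU, hxU, hμU⟩ := hx
  refine ⟨U, fun u hu => ?_, hU, hxU⟩
  simp only [msupport, mem_compl_iff, mem_setOf_eq, not_forall]
  exact ⟨U, hU, hu, hμU⟩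

lemma measurableSet_msupport {X : Type*} [TopologicalSpace X] [MeasurableSpace X] [OpensMeasurableSpace X]
    (μ : Measure X) : MeasurableSet (msupport μ) :=
  (isClosed_msupport μ).measurableSet

lemma msupport_compl_null {X : Type*} [TopologicalSpace X] [MeasurableSpace X]
    [SecondCountableTopology X] (μ : Measure X) : μ (msupport μ)ᶜ = 0 := by
  set S : Set (Set X) := {V | IsOpen V ∧ μ V = 0} with hS
  obtain ⟨T, hTc, hTS, hTeq⟩ := TopologicalSpace.isOpen_sUnion_countable S (fun V hV => hV.1)
  have h1 : (msupport μ)ᶜ ⊆ ⋃₀ S := by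
    intro x hx
    simp only [msupport, mem_compl_iff, mem_setOf_eq, not_forall] at hx
    obtain ⟨U, hU, hxU, hμU⟩ := hx
    exact ⟨U, ⟨hU, by simpa using hμU⟩, hxU⟩
  have h2 : μ (⋃₀ S) = 0 := by
    rw [← hTeq]
    exact (measure_sUnion_null_iff hTc).2 fun V hV => (hTS hV).2
  exact measure_mono_null h1 h2

lemma msupport_full {X : Type*} [TopologicalSpace X] [MeasurableSpace X] [OpensMeasurableSpace X]
    [SecondCountableTopology X] (μ : Measure X) [IsProbabilityMeasure μ] :
    μ (msupport μ) = 1 := by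
  have := measure_add_measure_compl (μ := μ) (measurableSet_msupport μ)
  rw [msupport_compl_null] at this; simpa using this

lemma msupport_nonempty {X : Type*} [TopologicalSpace X] [MeasurableSpace X] [OpensMeasurableSpace X]
    [SecondCountableTopology X] (μ : Measure X) [IsProbabilityMeasure μ] :
    (msupport μ).Nonempty := by
  rw [nonempty_iff_ne_empty]
  intro h
  have := msupport_full μ
  rw [h] at this
  simp at this

lemma prok_mem_of_le {Y : Type*} [MetricSpace Y] [MeasurableSpace Y]
    (μ ν : Measure Y) [IsProbabilityMeasure ν] {b t : ℝ} (h : prokDist μ ν ≤ b) (ht : b < t) :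
    ∀ A : Set Y, MeasurableSet A → ν A ≤ μ (Metric.thickening t A) + ENNReal.ofReal t := by
  have hne : {ε : ℝ | 0 < ε ∧ ∀ A : Set Y, MeasurableSet A →
      ν A ≤ μ (Metric.thickening ε A) + ENNReal.ofReal ε}.Nonempty := by
    refine ⟨2, two_pos, fun A hA => ?_⟩
    calc ν A ≤ 1 := prob_le_one
    _ ≤ ENNReal.ofReal 2 := by norm_num
    _ ≤ _ := le_add_self
  have hbdd : BddBelow {ε : ℝ | 0 < ε ∧ ∀ A : Set Y, MeasurableSet A →
      ν A ≤ μ (Metric.thickening ε A) + ENNReal.ofReal ε} :=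
    ⟨0, fun e he => he.1.le⟩
  have : prokDist μ ν < t := lt_of_le_of_lt h ht
  rw [prokDist, csInf_lt_iff hbdd hne] at this
  obtain ⟨e, ⟨he0, heP⟩, het⟩ := this
  intro A hA
  calc ν A ≤ μ (Metric.thickening e A) + ENNReal.ofReal e := heP A hA
    _ ≤ μ (Metric.thickening t A) + ENNReal.ofReal t :=
      add_le_add (measure_mono (Metric.thickening_mono het.le A))
        (ENNReal.ofReal_le_ofReal het.le)

lemma prokDist_le_of_forall {Y : Type*} [MetricSpace Y] [MeasurableSpace Y]
    (μ ν : Measure Y) {b : ℝ} (hb : 0 ≤ b)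
    (H : ∀ t, b < t → ∀ A : Set Y, MeasurableSet A →
      ν A ≤ μ (Metric.thickening t A) + ENNReal.ofReal t) :
    prokDist μ ν ≤ b := by
  have hbdd : BddBelow {ε : ℝ | 0 < ε ∧ ∀ A : Set Y, MeasurableSet A →
      ν A ≤ μ (Metric.thickening ε A) + ENNReal.ofReal ε} :=
    ⟨0, fun e he => he.1.le⟩
  refine le_of_forall_pos_le_add fun δ hδ => ?_
  exact csInf_le hbdd ⟨by linarith, H (b + δ) (by linarith)⟩


/-- Composition of maps that are 1-Lipschitz up to additive
errors (Corollary version). -/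
theorem comp_lipUpTo_weak {X Y Z : Type*} [MetricSpace X] [CompleteSpace X]
    [TopologicalSpace.SeparableSpace X] [MeasurableSpace X] [BorelSpace X]
    [MetricSpace Y] [CompleteSpace Y] [TopologicalSpace.SeparableSpace Y]
    [MeasurableSpace Y] [BorelSpace Y]
    [MetricSpace Z] [CompleteSpace Z] [TopologicalSpace.SeparableSpace Z]
    [MeasurableSpace Z] [BorelSpace Z]
    (μ : Measure X) (ν : Measure Y) (ρ : Measure Z)
    [IsProbabilityMeasure μ] [IsProbabilityMeasure ν] [IsProbabilityMeasure ρ]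
    (ε₁ ε₂ : ℝ) (h₁ : 0 ≤ ε₁) (h₂ : 0 ≤ ε₂)
    (f : msupport μ → msupport ν) (hfm : Measurable f) (hfl : LipUpTo μ ν f ε₁)
    (hfp : prokDist (Measure.map (fun x => (f x : Y)) (Measure.comap Subtype.val μ)) ν ≤ ε₁)
    (g : msupport ν → msupport ρ) (hgm : Measurable g) (hgl : LipUpTo ν ρ g ε₂)
    (hgp : prokDist (Measure.map (fun y => (g y : Z)) (Measure.comap Subtype.val ν)) ρ ≤ ε₂)
    (s : ℝ) (hs : 0 < s) :
    ∃ h : msupport μ → msupport ρ, Measurable h ∧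
      LipUpTo μ ρ h (3 * (ε₁ + ε₂) + s) ∧
      prokDist (Measure.map (fun x => (h x : Z)) (Measure.comap Subtype.val μ)) ρ
        ≤ 6 * (ε₁ + ε₂) + s := by
  haveI : SecondCountableTopology Y := UniformSpace.secondCountable_of_separable Y
  haveI : SecondCountableTopology Z := UniformSpace.secondCountable_of_separable Z
  set K : ℝ := 3 * (ε₁ + ε₂) + s with hK
  by_cases hK1 : 1 ≤ K
  · -- degenerate case : constant map
    obtain ⟨z₀, hz₀⟩ := msupport_nonempty ρ
    refine ⟨fun _ => ⟨z₀, hz₀⟩, measurable_const, ⟨∅, MeasurableSet.empty, empty_subset _,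
      by simp [ENNReal.ofReal_eq_zero.mpr (by linarith : 1 - K ≤ 0)],
      fun x x' hx hx' => absurd hx (notMem_empty _)⟩, ?_⟩
    refine prokDist_le_of_forall _ _ (by linarith) fun t ht A hA => ?_
    have h1t : (1 : ℝ) ≤ t := by linarith
    calc ρ A ≤ 1 := prob_le_one
      _ ≤ ENNReal.ofReal t := by
          rw [show (1 : ℝ≥0∞) = ENNReal.ofReal 1 by simp]
          exact ENNReal.ofReal_le_ofReal h1t
      _ ≤ _ := le_add_self
  · push_neg at hK1
    obtain ⟨X₀, hX₀m, hX₀sub, hX₀μ, hX₀lip⟩ := hfl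
    obtain ⟨Y₀, hY₀m, hY₀sub, hY₀ν, hY₀lip⟩ := hgl
    have hε₁lt : ε₁ < 1 / 3 := by nlinarith
    have hε₂lt : ε₂ < 1 / 3 := by nlinarith
    set δ : ℝ := s / 8 with hδ
    have hδ0 : 0 < δ := by positivity
    set t₁ : ℝ := ε₁ + δ with ht₁
    set t₂ : ℝ := ε₂ + δ with ht₂
    set r : ℝ := ε₁ + 2 * δ with hr
    -- Y₀ is nonempty
    have hY₀ne : Y₀.Nonempty := by
      rw [nonempty_iff_ne_empty]
      intro hempty
      rw [hempty, measure_empty] at hY₀ν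
      simp only [nonpos_iff_eq_zero, ENNReal.ofReal_eq_zero] at hY₀ν
      linarith [hY₀ν]
    haveI : Nonempty ↥Y₀ := hY₀ne.to_subtype
    -- dense sequence in Y₀
    set e : ℕ → ↥Y₀ := TopologicalSpace.denseSeq ↥Y₀ with he
    have hdense := TopologicalSpace.denseRange_denseSeq ↥Y₀
    -- the nearest-point-like map φ
    set P : ℕ → Y → Prop := fun n y => dist y (e n : Y) < r ∨ ∀ m, ¬ dist y (e m : Y) < r with hP
    have hPex : ∀ y, ∃ n, P n y := by
      intro y
      by_cases hc : ∃ m, dist y (e m : Y) < r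
      · obtain ⟨m, hm⟩ := hc; exact ⟨m, Or.inl hm⟩
      · push_neg at hc
        exact ⟨0, Or.inr fun m => not_lt.mpr (hc m)⟩
    have hPmeas : ∀ n, MeasurableSet {y | P n y} := by
      intro n
      have h1 : MeasurableSet {y : Y | dist y (e n : Y) < r} := measurableSet_ball
      have h2 : MeasurableSet {y : Y | ∀ m, ¬ dist y (e m : Y) < r} := by
        have : {y : Y | ∀ m, ¬ dist y (e m : Y) < r} =
            ⋂ m, {y : Y | dist y (e m : Y) < r}ᶜ := by
          ext y; simp
        rw [this]
        exact MeasurableSet.iInter fun m => (measurableSet_ball).compl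
      exact h1.union h2
    letI : ∀ n, DecidablePred (P n) := fun n => Classical.decPred _
    set φ0 : Y → ↥Y₀ := fun y => e (Nat.find (hPex y)) with hφ0
    have hφ0m : Measurable φ0 :=
      Measurable.find (f := fun n (_ : Y) => e n) (fun n => measurable_const) hPmeas hPex
    set φ : Y → ↥(msupport ν) := fun y => ⟨(φ0 y : Y), hY₀sub (φ0 y).2⟩ with hφ
    have hφm : Measurable φ :=
      Measurable.subtype_mk (measurable_subtype_coe.comp hφ0m)
    have hφY₀ : ∀ y, (φ y : Y) ∈ Y₀ := fun y => (φ0 y).2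
    have hφdist : ∀ y ∈ Metric.thickening t₁ Y₀, dist y (φ y : Y) < r := by
      intro y hy
      obtain ⟨y₀, hy₀Y₀, hdy₀⟩ := Metric.mem_thickening_iff.mp hy
      obtain ⟨n, hn⟩ := Metric.denseRange_iff.mp hdense ⟨y₀, hy₀Y₀⟩ δ hδ0
      rw [Subtype.dist_eq] at hn
      have hex : ∃ m, dist y (e m : Y) < r := by
        refine ⟨n, ?_⟩
        calc dist y (e n : Y) ≤ dist y y₀ + dist y₀ (e n : Y) := dist_triangle _ _ _
          _ < t₁ + δ := add_lt_add hdy₀ hn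
          _ = r := by rw [ht₁, hr]; ring
      have := Nat.find_spec (hPex y)
      rcases this with h' | h'
      · exact h'
      · exact absurd hex (by push_neg; intro m; exact not_lt.mp (h' m))
    -- the composed map
    set h : ↥(msupport μ) → ↥(msupport ρ) := fun x => g (φ (f x : Y)) with hh
    have hfm' : Measurable fun x : ↥(msupport μ) => (f x : Y) :=
      measurable_subtype_coe.comp hfm
    have hgm' : Measurable fun y : ↥(msupport ν) => (g y : Z) :=
      measurable_subtype_coe.comp hgm
    have hhm : Measurable h := hgm.comp (hφm.comp hfm')
    have hhm' : Measurable fun x : ↥(msupport μ) => (h x : Z) :=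
      measurable_subtype_coe.comp hhm
    -- measure conversion lemmas
    have hembX : MeasurableEmbedding (Subtype.val : ↥(msupport μ) → X) :=
      MeasurableEmbedding.subtype_coe (measurableSet_msupport μ)
    have hembY : MeasurableEmbedding (Subtype.val : ↥(msupport ν) → Y) :=
      MeasurableEmbedding.subtype_coe (measurableSet_msupport ν)
    have hcomapμ : ∀ s : Set ↥(msupport μ), MeasurableSet s →
        Measure.comap Subtype.val μ s = μ (Subtype.val '' s) := fun s hs =>
      Measure.comap_apply _ Subtype.val_injective (fun u hu => hembX.measurableSet_image' hu) μ hs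
    have hcomapν : ∀ s : Set ↥(msupport ν), MeasurableSet s →
        Measure.comap Subtype.val ν s = ν (Subtype.val '' s) := fun s hs =>
      Measure.comap_apply _ Subtype.val_injective (fun u hu => hembY.measurableSet_image' hu) ν hs
    have hmapf : ∀ B : Set Y, MeasurableSet B →
        Measure.map (fun x => (f x : Y)) (Measure.comap Subtype.val μ) B
          = μ (Subtype.val '' ((fun x => (f x : Y)) ⁻¹' B)) := fun B hB => by
      rw [Measure.map_apply hfm' hB, hcomapμ _ (hfm' hB)]
    have hmapg : ∀ B : Set Z, MeasurableSet B →
        Measure.map (fun y => (g y : Z)) (Measure.comap Subtype.val ν) B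
          = ν (Subtype.val '' ((fun y => (g y : Z)) ⁻¹' B)) := fun B hB => by
      rw [Measure.map_apply hgm' hB, hcomapν _ (hgm' hB)]
    have hmaph : ∀ B : Set Z, MeasurableSet B →
        Measure.map (fun x => (h x : Z)) (Measure.comap Subtype.val μ) B
          = μ (Subtype.val '' ((fun x => (h x : Z)) ⁻¹' B)) := fun B hB => by
      rw [Measure.map_apply hhm' hB, hcomapμ _ (hhm' hB)]
    -- the good set W for the Lipschitz bound
    set W : Set X := Subtype.val '' ((fun x => (f x : Y)) ⁻¹' Metric.thickening t₁ Y₀) with hW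
    have hWm : MeasurableSet W :=
      hembX.measurableSet_image' (hfm' Metric.isOpen_thickening.measurableSet)
    have hμW : ENNReal.ofReal (1 - ε₂ - t₁) ≤ μ W := by
      have hstep := prok_mem_of_le _ ν hfp (by linarith : ε₁ < t₁) Y₀ hY₀m
      rw [hmapf _ Metric.isOpen_thickening.measurableSet] at hstep
      have h' : ENNReal.ofReal (1 - ε₂ - t₁) + ENNReal.ofReal t₁ ≤ μ W + ENNReal.ofReal t₁ := by
        calc ENNReal.ofReal (1 - ε₂ - t₁) + ENNReal.ofReal t₁
            = ENNReal.ofReal (1 - ε₂) := by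
              rw [← ENNReal.ofReal_add (by nlinarith) (by linarith)]; ring_nf
          _ ≤ ν Y₀ := hY₀ν
          _ ≤ μ W + ENNReal.ofReal t₁ := hstep
      exact (ENNReal.add_le_add_iff_right ENNReal.ofReal_ne_top).mp h'
    set X₁ : Set X := X₀ ∩ W with hX₁
    have hX₁m : MeasurableSet X₁ := hX₀m.inter hWm
    have hX₁sub : X₁ ⊆ msupport μ := fun a ha => by
      obtain ⟨u, _, huv⟩ := ha.2; exact huv ▸ u.2
    have hμX₁ : ENNReal.ofReal (1 - K) ≤ μ X₁ := by
      have heq := measure_union_add_inter (μ := μ) X₀ hWm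
      have h' : ENNReal.ofReal (1 - K) + 1 ≤ μ X₁ + 1 := by
        calc ENNReal.ofReal (1 - K) + 1
            = ENNReal.ofReal (1 - K) + ENNReal.ofReal 1 := by simp
          _ = ENNReal.ofReal (2 - K) := by
              rw [← ENNReal.ofReal_add (by linarith) (by norm_num)]; ring_nf
          _ ≤ ENNReal.ofReal ((1 - ε₁) + (1 - ε₂ - t₁)) :=
              ENNReal.ofReal_le_ofReal (by simp only [ht₁, hK]; linarith)
          _ = ENNReal.ofReal (1 - ε₁) + ENNReal.ofReal (1 - ε₂ - t₁) :=
              ENNReal.ofReal_add (by linarith) (by nlinarith)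
          _ ≤ μ X₀ + μ W := add_le_add hX₀μ hμW
          _ = μ (X₀ ∪ W) + μ X₁ := heq.symm
          _ ≤ 1 + μ X₁ := add_le_add_left prob_le_one _
          _ = μ X₁ + 1 := add_comm _ _
      exact (ENNReal.add_le_add_iff_right one_ne_top).mp h'
    have hlip : ∀ x x' : ↥(msupport μ), (x : X) ∈ X₁ → (x' : X) ∈ X₁ →
        dist (h x : Z) (h x' : Z) ≤ dist (x : X) (x' : X) + K := by
      intro x x' hx hx'
      have hfx : (f x : Y) ∈ Metric.thickening t₁ Y₀ := by
        obtain ⟨u, hu, huv⟩ := hx.2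
        have : u = x := Subtype.val_injective huv
        rwa [this] at hu
      have hfx' : (f x' : Y) ∈ Metric.thickening t₁ Y₀ := by
        obtain ⟨u, hu, huv⟩ := hx'.2
        have : u = x' := Subtype.val_injective huv
        rwa [this] at hu
      have step1 : dist (h x : Z) (h x' : Z)
          ≤ dist (φ (f x : Y) : Y) (φ (f x' : Y) : Y) + ε₂ :=
        hY₀lip _ _ (hφY₀ _) (hφY₀ _)
      have step2 : dist (φ (f x : Y) : Y) (φ (f x' : Y) : Y)
          ≤ dist (f x : Y) (f x' : Y) + 2 * r := by
        have d1 := hφdist _ hfx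
        have d2 := hφdist _ hfx'
        have t4 := dist_triangle4 (φ (f x : Y) : Y) (f x : Y) (f x' : Y) (φ (f x' : Y) : Y)
        have c1 := dist_comm (φ (f x : Y) : Y) (f x : Y)
        have c2 := dist_comm (f x' : Y) (φ (f x' : Y) : Y)
        linarith
      have step3 : dist (f x : Y) (f x' : Y) ≤ dist (x : X) (x' : X) + ε₁ :=
        hX₀lip x x' hx.1 hx'.1
      have : K ≥ ε₂ + 2 * r + ε₁ := by simp only [hK, hr, hδ]; linarith
      linarith
    refine ⟨h, hhm, ⟨X₁, hX₁m, hX₁sub, hμX₁, hlip⟩, ?_⟩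
    -- the Prokhorov estimate
    refine prokDist_le_of_forall _ _ (by linarith) fun t ht A hA => ?_
    set B : Set Z := Metric.thickening t₂ A with hB
    have hBm : MeasurableSet B := Metric.isOpen_thickening.measurableSet
    set C : Set Y := Subtype.val '' ((fun y => (g y : Z)) ⁻¹' B) with hC
    have hCm : MeasurableSet C := hembY.measurableSet_image' (hgm' hBm)
    set C' : Set Y := C ∩ Y₀ with hC'
    have hC'm : MeasurableSet C' := hCm.inter hY₀m
    -- complement bound for Y₀
    have hνY₀c : ν Y₀ᶜ ≤ ENNReal.ofReal ε₂ := by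
      have heq : ν Y₀ + ν Y₀ᶜ = 1 := by
        rw [measure_add_measure_compl hY₀m, measure_univ]
      have h' : ENNReal.ofReal (1 - ε₂) + ν Y₀ᶜ ≤ ENNReal.ofReal (1 - ε₂) + ENNReal.ofReal ε₂ := by
        calc ENNReal.ofReal (1 - ε₂) + ν Y₀ᶜ ≤ ν Y₀ + ν Y₀ᶜ := add_le_add_left hY₀ν _
          _ = 1 := heq
          _ = ENNReal.ofReal (1 - ε₂) + ENNReal.ofReal ε₂ := by
              rw [← ENNReal.ofReal_add (by linarith) h₂]; norm_num
      exact (ENNReal.add_le_add_iff_left ENNReal.ofReal_ne_top).mp h'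
    -- the key inclusion
    have hincl : Subtype.val '' ((fun x => (f x : Y)) ⁻¹' Metric.thickening t₁ C')
        ⊆ Subtype.val '' ((fun x => (h x : Z)) ⁻¹' Metric.thickening t A) := by
      apply image_mono
      intro x hx
      simp only [mem_preimage] at hx ⊢
      obtain ⟨y, hyC', hdy⟩ := Metric.mem_thickening_iff.mp hx
      obtain ⟨hyC, hyY₀⟩ := hyC'
      obtain ⟨y', hy'pre, hy'val⟩ := hyC
      have hfxth : (f x : Y) ∈ Metric.thickening t₁ Y₀ :=
        Metric.mem_thickening_iff.mpr ⟨y, hyY₀, hdy⟩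
      have hφfx := hφdist _ hfxth
      have hgl1 : dist (g (φ (f x : Y)) : Z) (g y' : Z) ≤ dist (φ (f x : Y) : Y) (y' : Y) + ε₂ :=
        hY₀lip _ _ (hφY₀ _) (by rw [hy'val]; exact hyY₀)
      have hd2 : dist (φ (f x : Y) : Y) (y' : Y) < r + t₁ := by
        calc dist (φ (f x : Y) : Y) (y' : Y)
            ≤ dist (φ (f x : Y) : Y) (f x : Y) + dist (f x : Y) (y' : Y) := dist_triangle _ _ _
          _ < r + t₁ := by
              rw [dist_comm (φ (f x : Y) : Y) (f x : Y), hy'val]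
              exact add_lt_add hφfx hdy
      obtain ⟨a, haA, hda⟩ := Metric.mem_thickening_iff.mp hy'pre
      refine Metric.mem_thickening_iff.mpr ⟨a, haA, ?_⟩
      have : dist (h x : Z) a ≤ dist (h x : Z) (g y' : Z) + dist (g y' : Z) a :=
        dist_triangle _ _ _
      have hlt : dist (h x : Z) a < r + t₁ + ε₂ + t₂ := by
        simp only [hh] at this ⊢
        linarith
      have hle : r + t₁ + ε₂ + t₂ ≤ t := by
        simp only [hr, ht₁, ht₂, hδ]
        simp only [hK] at ht hK1
        linarith
      linarith
    -- combine
    have hsum : ENNReal.ofReal t₁ + ENNReal.ofReal ε₂ + ENNReal.ofReal t₂ ≤ ENNReal.ofReal t := by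
      rw [← ENNReal.ofReal_add (by linarith) (by linarith),
        ← ENNReal.ofReal_add (by linarith) (by linarith)]
      refine ENNReal.ofReal_le_ofReal ?_
      simp only [ht₁, ht₂, hδ]
      simp only [hK] at ht hK1
      linarith
    have step1 := prok_mem_of_le _ ρ hgp (by linarith : ε₂ < t₂) A hA
    have step2 := prok_mem_of_le _ ν hfp (by linarith : ε₁ < t₁) C' hC'm
    have hthC'm : MeasurableSet (Metric.thickening t₁ C') :=
      Metric.isOpen_thickening.measurableSet
    have hthAm : MeasurableSet (Metric.thickening t A) :=
      Metric.isOpen_thickening.measurableSet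
    calc ρ A ≤ Measure.map (fun y => (g y : Z)) (Measure.comap Subtype.val ν) B
          + ENNReal.ofReal t₂ := step1
      _ = ν C + ENNReal.ofReal t₂ := by rw [hmapg _ hBm]
      _ ≤ (ν C' + ENNReal.ofReal ε₂) + ENNReal.ofReal t₂ := by
          refine add_le_add_left ?_ _
          calc ν C ≤ ν (C ∩ Y₀) + ν (C \ Y₀) := measure_le_inter_add_diff _ _ _
            _ ≤ ν C' + ν Y₀ᶜ := add_le_add_right (measure_mono (diff_subset_compl _ _)) _
            _ ≤ ν C' + ENNReal.ofReal ε₂ := add_le_add_right hνY₀c _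
      _ ≤ ((Measure.map (fun x => (f x : Y)) (Measure.comap Subtype.val μ)
            (Metric.thickening t₁ C') + ENNReal.ofReal t₁) + ENNReal.ofReal ε₂)
          + ENNReal.ofReal t₂ := by
          exact add_le_add_left (add_le_add_left step2 _) _
      _ = μ (Subtype.val '' ((fun x => (f x : Y)) ⁻¹' Metric.thickening t₁ C'))
          + (ENNReal.ofReal t₁ + ENNReal.ofReal ε₂ + ENNReal.ofReal t₂) := by
          rw [hmapf _ hthC'm]; ring
      _ ≤ μ (Subtype.val '' ((fun x => (h x : Z)) ⁻¹' Metric.thickening t A))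
          + ENNReal.ofReal t := add_le_add (measure_mono hincl) hsum
      _ = Measure.map (fun x => (h x : Z)) (Measure.comap Subtype.val μ)
          (Metric.thickening t A) + ENNReal.ofReal t := by rw [hmaph _ hthAm]
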